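/- For finitely presented barcodes B and C, d_W^∞(B, C) = lim_{p→∞} d_W^p(B, C). -/

import Mathlib

open scoped ENNReal Classical

noncomputable section

/-- A point of a (finitely presented) barcode: `(a₁, a₂)` with `a₂` possibly `∞`.
We use `EReal` coordinates for uniformity, with the conventions of the paper. -/
abbrev EPoint : Type := EReal × EReal

/-- Distance between extended-real coordinates, with the convention `∞ − ∞ = 0`. -/
def cd (x y : EReal) : ℝ≥0∞ :=
  if x = y then 0 else if x = ⊤ ∨ y = ⊤ then ⊤ else ENNReal.ofReal |x.toReal - y.toReal|

/-- The nearest diagonal point `m(a) = ((a₁+a₂)/2, (a₁+a₂)/2)`. -/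
def mpt (a : EPoint) : EPoint :=
  ((a.1 + a.2) * ((1 / 2 : ℝ) : EReal), (a.1 + a.2) * ((1 / 2 : ℝ) : EReal))

/-- `σ` is a (partial) matching: no index of either side is used twice. -/
def IsMatching {m q : ℕ} (σ : Finset (Fin m × Fin q)) : Prop :=
  ∀ x ∈ σ, ∀ y ∈ σ, (x.1 = y.1 ∨ x.2 = y.2) → x = y

/-- Left indices unmatched by `σ`. -/
def unmatchedL {m q : ℕ} (σ : Finset (Fin m × Fin q)) : Finset (Fin m) :=
  Finset.univ.filter fun i => ∀ x ∈ σ, x.1 ≠ i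

/-- Right indices unmatched by `σ`. -/
def unmatchedR {m q : ℕ} (σ : Finset (Fin m × Fin q)) : Finset (Fin q) :=
  Finset.univ.filter fun j => ∀ x ∈ σ, x.2 ≠ j

/-- The cost `cost(σ,p)` of a matching: for finite `p`, the `p`-th root of the sum of the
`ℓ^p`-costs of matched pairs and of the diagonal costs of unmatched points; for `p = ∞`,
the corresponding maximum of `ℓ^∞`-costs. -/
def wcost (p : ℝ≥0∞) {m q : ℕ} (B : Fin m → EPoint) (C : Fin q → EPoint)
    (σ : Finset (Fin m × Fin q)) : ℝ≥0∞ :=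
  if p = ⊤ then
    max (σ.sup fun x => max (cd (B x.1).1 (C x.2).1) (cd (B x.1).2 (C x.2).2))
      (max ((unmatchedL σ).sup fun i =>
              max (cd (B i).1 (mpt (B i)).1) (cd (B i).2 (mpt (B i)).2))
           ((unmatchedR σ).sup fun j =>
              max (cd (C j).1 (mpt (C j)).1) (cd (C j).2 (mpt (C j)).2)))
  else
    ((∑ x ∈ σ, (cd (B x.1).1 (C x.2).1 ^ p.toReal + cd (B x.1).2 (C x.2).2 ^ p.toReal)) +
     (∑ i ∈ unmatchedL σ,
        (cd (B i).1 (mpt (B i)).1 ^ p.toReal + cd (B i).2 (mpt (B i)).2 ^ p.toReal)) +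
     (∑ j ∈ unmatchedR σ,
        (cd (C j).1 (mpt (C j)).1 ^ p.toReal + cd (C j).2 (mpt (C j)).2 ^ p.toReal)))
      ^ (1 / p.toReal)

/-- The `p`-Wasserstein distance between (finitely presented) barcodes: the infimum of
`cost(σ,p)` over all matchings `σ`. -/
def dW (p : ℝ≥0∞) {m q : ℕ} (B : Fin m → EPoint) (C : Fin q → EPoint) : ℝ≥0∞ :=
  ⨅ (σ : Finset (Fin m × Fin q)) (_ : IsMatching σ), wcost p B C σ

/-- A finitely presented barcode: each interval `[a₁,a₂)` has real left endpoint and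
`a₁ < a₂ ∈ ℝ ∪ {∞}`. -/
def IsBarcode {m : ℕ} (B : Fin m → EPoint) : Prop :=
  ∀ i, (B i).1 < (B i).2 ∧ ∃ x : ℝ, (B i).1 = (x : EReal)

/- ### Auxiliary lemmas -/

open Filter Finset

/-- Sup over a `disjSum`. -/
lemma sup_disj_sum {α β γ : Type*} [SemilatticeSup γ] [OrderBot γ]
    (s : Finset α) (t : Finset β) (f : α ⊕ β → γ) :
    (s.disjSum t).sup f = (s.sup fun a => f (Sum.inl a)) ⊔ (t.sup fun b => f (Sum.inr b)) := by
  rw [← Finset.map_inl_disjUnion_map_inr, Finset.disjUnion_eq_union, Finset.sup_union,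
    Finset.sup_map, Finset.sup_map]
  rfl

/-- The key analytic fact: `(∑ f i ^ t) ^ (1/t) → sup f` as `t → ∞`. -/
lemma tendsto_sum_rpow {ι : Type*} (s : Finset ι) (f : ι → ℝ≥0∞) :
    Tendsto (fun t : ℝ => (∑ i ∈ s, f i ^ t) ^ (1 / t)) atTop (nhds (s.sup f)) := by
  by_cases htop : ∃ i ∈ s, f i = ⊤
  · obtain ⟨i, hi, hfi⟩ := htop
    have hsup : s.sup f = ⊤ := top_unique (hfi ▸ Finset.le_sup hi)
    rw [hsup]
    refine Tendsto.congr' ?_ (tendsto_const_nhds (x := (⊤ : ℝ≥0∞)))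
    filter_upwards [eventually_ge_atTop (1 : ℝ)] with t ht
    have ht0 : (0:ℝ) < t := lt_of_lt_of_le one_pos ht
    have hsum : (∑ j ∈ s, f j ^ t) = ⊤ := by
      refine top_unique ?_
      calc (⊤ : ℝ≥0∞) = f i ^ t := by rw [hfi, ENNReal.top_rpow_of_pos ht0]
        _ ≤ _ := Finset.single_le_sum (f := fun j => f j ^ t) (fun _ _ => zero_le) hi
    rw [hsum, ENNReal.top_rpow_of_pos (by positivity)]
  · push_neg at htop
    set M := s.sup f with hM
    by_cases hM0 : M = 0
    · rw [hM0]
      refine Tendsto.congr' ?_ (tendsto_const_nhds (x := (0 : ℝ≥0∞)))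
      filter_upwards [eventually_ge_atTop (1 : ℝ)] with t ht
      have ht0 : (0:ℝ) < t := lt_of_lt_of_le one_pos ht
      have hz : ∀ i ∈ s, f i = 0 := by
        intro i hi
        have := Finset.le_sup (f := f) hi
        rw [← hM, hM0] at this
        exact le_antisymm this zero_le
      rw [Finset.sum_congr rfl fun i hi => by rw [hz i hi, ENNReal.zero_rpow_of_pos ht0],
        Finset.sum_const, smul_zero, ENNReal.zero_rpow_of_pos (by positivity)]
    · obtain ⟨i₀, hi₀, hMe⟩ := Finset.exists_mem_eq_sup s (by
        by_contra h
        rw [Finset.not_nonempty_iff_eq_empty] at h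
        exact hM0 (by simp [hM, h])) f
      have hMe' : M = f i₀ := hMe
      have hMtop : M ≠ ⊤ := by rw [hMe']; exact htop i₀ hi₀
      have hcard : (1:ℝ≥0∞) ≤ (s.card : ℝ≥0∞) := by
        have : 0 < s.card := Finset.card_pos.mpr ⟨i₀, hi₀⟩
        exact_mod_cast Nat.one_le_iff_ne_zero.mpr this.ne'
      -- upper-bound limit: card^(1/t) * M → M
      have hcard0 : (s.card : ℝ≥0∞) ≠ 0 := by intro h; rw [h] at hcard; simp at hcard
      have hcardtop : (s.card : ℝ≥0∞) ≠ ⊤ := ENNReal.natCast_ne_top _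
      have hc1 : Tendsto (fun t : ℝ => (s.card : ℝ≥0∞) ^ (1 / t)) atTop (nhds 1) := by
        set r : ℝ := (s.card : ℝ) with hr
        have hr0 : (0:ℝ) < r := by
          have h2 : 0 < s.card := Finset.card_pos.mpr ⟨i₀, hi₀⟩
          rw [hr]
          exact_mod_cast h2
        have heq : ∀ t : ℝ, (s.card : ℝ≥0∞) ^ (1 / t) = ENNReal.ofReal (r ^ (1 / t)) := by
          intro t
          rw [show ((s.card : ℝ≥0∞)) = ENNReal.ofReal r by
            simp [r, ENNReal.ofReal_natCast], ENNReal.ofReal_rpow_of_pos hr0]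
        simp_rw [heq]
        have h2 : Tendsto (fun t : ℝ => r ^ (1 / t)) atTop (nhds 1) := by
          have : Tendsto (fun t : ℝ => 1 / t) atTop (nhds 0) := by
            simpa [one_div] using tendsto_inv_atTop_zero (𝕜 := ℝ)
          have hcont : ContinuousAt (fun y : ℝ => r ^ y) 0 :=
            Real.continuousAt_const_rpow hr0.ne'
          have := hcont.tendsto.comp this
          simpa [Real.rpow_zero, Function.comp_def] using this
        have := (ENNReal.continuous_ofReal.tendsto 1).comp h2
        simpa [Function.comp_def] using this
      have hub : Tendsto (fun t : ℝ => (s.card : ℝ≥0∞) ^ (1 / t) * M) atTop (nhds M) := by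
        have := ENNReal.Tendsto.mul_const hc1 (Or.inl one_ne_zero) (b := M)
        simpa using this
      refine tendsto_of_tendsto_of_tendsto_of_le_of_le'
        (tendsto_const_nhds (x := M)) hub ?_ ?_
      · filter_upwards [eventually_ge_atTop (1 : ℝ)] with t ht
        have ht0 : (0:ℝ) < t := lt_of_lt_of_le one_pos ht
        have h1 : M ^ t ≤ ∑ i ∈ s, f i ^ t := by
          rw [hMe']
          exact Finset.single_le_sum (f := fun i => f i ^ t) (fun _ _ => zero_le) hi₀
        have := ENNReal.rpow_le_rpow h1 (by positivity : (0:ℝ) ≤ 1 / t)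
        rwa [← ENNReal.rpow_mul, mul_one_div, div_self ht0.ne', ENNReal.rpow_one] at this
      · filter_upwards [eventually_ge_atTop (1 : ℝ)] with t ht
        have ht0 : (0:ℝ) < t := lt_of_lt_of_le one_pos ht
        have h1 : (∑ i ∈ s, f i ^ t) ≤ (s.card : ℝ≥0∞) * M ^ t := by
          calc (∑ i ∈ s, f i ^ t) ≤ ∑ _i ∈ s, M ^ t :=
            Finset.sum_le_sum fun i hi =>
              ENNReal.rpow_le_rpow (Finset.le_sup hi) ht0.le
          _ = (s.card : ℝ≥0∞) * M ^ t := by rw [Finset.sum_const, nsmul_eq_mul]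
        have h2 := ENNReal.rpow_le_rpow h1 (by positivity : (0:ℝ) ≤ 1 / t)
        calc (∑ i ∈ s, f i ^ t) ^ (1 / t) ≤ ((s.card : ℝ≥0∞) * M ^ t) ^ (1 / t) := h2
          _ = (s.card : ℝ≥0∞) ^ (1 / t) * M := by
            rw [ENNReal.mul_rpow_of_nonneg _ _ (by positivity : (0:ℝ) ≤ 1 / t),
              ← ENNReal.rpow_mul, mul_one_div, div_self ht0.ne', ENNReal.rpow_one]

/-- The combined index type for the terms of a matching cost. -/
abbrev MIdx (m q : ℕ) : Type := ((Fin m × Fin q) ⊕ (Fin m ⊕ Fin q)) × Bool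

def G {m q : ℕ} (B : Fin m → EPoint) (C : Fin q → EPoint) : MIdx m q → ℝ≥0∞
  | (Sum.inl x, true) => cd (B x.1).1 (C x.2).1
  | (Sum.inl x, false) => cd (B x.1).2 (C x.2).2
  | (Sum.inr (Sum.inl i), true) => cd (B i).1 (mpt (B i)).1
  | (Sum.inr (Sum.inl i), false) => cd (B i).2 (mpt (B i)).2
  | (Sum.inr (Sum.inr j), true) => cd (C j).1 (mpt (C j)).1
  | (Sum.inr (Sum.inr j), false) => cd (C j).2 (mpt (C j)).2

def T {m q : ℕ} (σ : Finset (Fin m × Fin q)) : Finset (MIdx m q) :=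
  (σ.disjSum ((unmatchedL σ).disjSum (unmatchedR σ))) ×ˢ (Finset.univ : Finset Bool)

lemma wcost_top_eq {m q : ℕ} (B : Fin m → EPoint) (C : Fin q → EPoint)
    (σ : Finset (Fin m × Fin q)) :
    wcost ⊤ B C σ = (T σ).sup (G B C) := by
  rw [wcost, if_pos rfl, T, Finset.sup_product_left]
  have hbool : ∀ g : Bool → ℝ≥0∞, (Finset.univ : Finset Bool).sup g = g true ⊔ g false := by
    intro g
    rw [show (Finset.univ : Finset Bool) = {true, false} by rfl]
    simp
  simp only [sup_disj_sum, hbool]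
  rfl

lemma wcost_ofReal_eq {m q : ℕ} (B : Fin m → EPoint) (C : Fin q → EPoint)
    (σ : Finset (Fin m × Fin q)) {t : ℝ} (ht : 1 ≤ t) :
    wcost (ENNReal.ofReal t) B C σ = (∑ x ∈ T σ, G B C x ^ t) ^ (1 / t) := by
  have ht0 : (0:ℝ) ≤ t := le_trans zero_le_one ht
  rw [wcost, if_neg ENNReal.ofReal_ne_top, ENNReal.toReal_ofReal ht0, T,
    Finset.sum_product]
  congr 1
  simp only [Finset.sum_disjSum, Fintype.sum_bool, G]
  ring

lemma tendsto_wcost {m q : ℕ} (B : Fin m → EPoint) (C : Fin q → EPoint)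
    (σ : Finset (Fin m × Fin q)) :
    Tendsto (fun t : ℝ => wcost (ENNReal.ofReal t) B C σ) atTop
      (nhds (wcost ⊤ B C σ)) := by
  rw [wcost_top_eq]
  refine Tendsto.congr' ?_ (tendsto_sum_rpow (T σ) (G B C))
  filter_upwards [eventually_ge_atTop (1 : ℝ)] with t ht
  exact (wcost_ofReal_eq B C σ ht).symm

lemma tendsto_finset_inf {ι : Type*} (s : Finset ι) (f : ℝ → ι → ℝ≥0∞) (a : ι → ℝ≥0∞)
    (h : ∀ i ∈ s, Tendsto (fun t => f t i) atTop (nhds (a i))) :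
    Tendsto (fun t => s.inf (f t)) atTop (nhds (s.inf a)) := by
  classical
  revert h
  induction s using Finset.induction_on with
  | empty =>
    intro _
    simpa using (tendsto_const_nhds :
      Tendsto (fun _ : ℝ => (⊤ : ℝ≥0∞)) atTop (nhds ⊤))
  | @insert b s' hb ih =>
    intro h
    simp only [Finset.inf_insert]
    exact (h b (Finset.mem_insert_self _ _)).min
      (ih fun i hi => h i (Finset.mem_insert_of_mem hi))

/-- For finitely presented barcodes `B` and `C`,
`d_W^∞(B,C) = lim_{p→∞} d_W^p(B,C)`. -/
theorem dW_top_eq_lim {m q : ℕ}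
    (B : Fin m → EPoint) (C : Fin q → EPoint)
    (hB : IsBarcode B) (hC : IsBarcode C) :
    Filter.Tendsto (fun t : ℝ => dW (ENNReal.ofReal t) B C) Filter.atTop
      (nhds (dW ⊤ B C)) := by
  classical
  have key : ∀ p : ℝ≥0∞, dW p B C =
      (Finset.univ.filter (fun σ : Finset (Fin m × Fin q) => IsMatching σ)).inf
        (fun σ => wcost p B C σ) := by
    intro p
    rw [dW, Finset.inf_eq_iInf]
    apply le_antisymm
    · exact le_iInf fun σ => le_iInf fun hσ =>
        iInf_le_of_le σ (iInf_le _ ((Finset.mem_filter.mp hσ).2))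
    · exact le_iInf fun σ => le_iInf fun hσ =>
        iInf_le_of_le σ (iInf_le _ (Finset.mem_filter.mpr ⟨Finset.mem_univ _, hσ⟩))
  simp_rw [key]
  exact tendsto_finset_inf _ _ _ fun σ _ => tendsto_wcost B C σ

end
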